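/- Let κ ≤ λ be infinite cardinals with κ uncountable, let X be a set of cardinality λ, and let π represent a cardinality-preserving automorphism of P(X)/I_κ. Then for every A ⊆ X there exists B ⊆ X with A ⊆ B, |B| = |A|, and π(B) ∼_κ B. -/

import Mathlib

open Cardinal Set

universe u

/-- `A ∼_κ B`: the symmetric difference of `A` and `B` has cardinality `< κ`. -/
def Sim {X : Type u} (κ : Cardinal.{u}) (A B : Set X) : Prop :=
  #(↥(symmDiff A B)) < κ

/-- `π : P(X) → P(X)` represents an automorphism of `P(X)/I_κ`. -/
def IsAutoRep {X : Type u} (κ : Cardinal.{u}) (π : Set X → Set X) : Prop :=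
  (∀ A B : Set X, Sim κ A B → Sim κ (π A) (π B)) ∧
  (∀ A B : Set X, Sim κ (π (A ∪ B)) (π A ∪ π B)) ∧
  (∀ A : Set X, Sim κ (π Aᶜ) (π A)ᶜ) ∧
  (∀ B : Set X, ∃ A : Set X, Sim κ (π A) B) ∧
  (∀ A B : Set X, Sim κ (π A) (π B) → Sim κ A B)

/-- `π` is trivial on `Z`: some `f : X → Z` has `π(A) ∼_κ f⁻¹(A)` for all `A ⊆ Z`. -/
def TrivialOn {X : Type u} (κ : Cardinal.{u}) (π : Set X → Set X) (Z : Set X) : Prop :=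
  ∃ f : X → X, (∀ x, f x ∈ Z) ∧ ∀ A : Set X, A ⊆ Z → Sim κ (π A) (f ⁻¹' A)

/-- `π` is trivial: some `f : X → X` has `π(A) ∼_κ f⁻¹(A)` for all `A ⊆ X`. -/
def IsTrivial {X : Type u} (κ : Cardinal.{u}) (π : Set X → Set X) : Prop :=
  ∃ f : X → X, ∀ A : Set X, Sim κ (π A) (f ⁻¹' A)

/-- `π` is cardinality-preserving. -/
def CardPres {X : Type u} (κ : Cardinal.{u}) (π : Set X → Set X) : Prop :=
  ∀ A : Set X, ∃ B : Set X, #(↥B) = #(↥A) ∧ Sim κ (π A) B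

section Aux

variable {X : Type u} {κ : Cardinal.{u}}

lemma small_mono {s t : Set X} (h : s ⊆ t) (ht : #(↥t) < κ) : #(↥s) < κ :=
  lt_of_le_of_lt (Cardinal.mk_le_mk_of_subset h) ht

lemma small_un (hκ : ℵ₀ ≤ κ) {s t : Set X} (hs : #(↥s) < κ) (ht : #(↥t) < κ) :
    #(↥(s ∪ t)) < κ :=
  lt_of_le_of_lt (Cardinal.mk_union_le s t) (Cardinal.add_lt_of_lt hκ hs ht)

lemma small_un3 (hκ : ℵ₀ ≤ κ) {s t r : Set X} (hs : #(↥s) < κ) (ht : #(↥t) < κ)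
    (hr : #(↥r) < κ) : #(↥(s ∪ t ∪ r)) < κ :=
  small_un hκ (small_un hκ hs ht) hr

lemma sim_of_smalls (hκ : ℵ₀ ≤ κ) {s t : Set X} (h1 : #(↥(s \ t)) < κ)
    (h2 : #(↥(t \ s)) < κ) : Sim κ s t := by
  unfold Sim
  rw [Set.symmDiff_def]
  exact small_un hκ h1 h2

lemma sim_symm {s t : Set X} (h : Sim κ s t) : Sim κ t s := by
  unfold Sim at h ⊢
  rwa [symmDiff_comm]

lemma Sim.diff1 {s t : Set X} (h : Sim κ s t) : #(↥(s \ t)) < κ :=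
  small_mono (by rw [Set.symmDiff_def]; exact subset_union_left) h

lemma Sim.diff2 {s t : Set X} (h : Sim κ s t) : #(↥(t \ s)) < κ :=
  small_mono (by rw [Set.symmDiff_def]; exact subset_union_right) h

lemma sim_small {s t : Set X} (h : Sim κ s t) (hs : #(↥s) < κ) (hκ : ℵ₀ ≤ κ) :
    #(↥t) < κ := by
  have : t ⊆ s ∪ (t \ s) := fun x hx => by
    by_cases hxs : x ∈ s
    · exact Or.inl hxs
    · exact Or.inr ⟨hx, hxs⟩
  exact small_mono this (small_un hκ hs h.diff2)

variable {π : Set X → Set X}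

lemma pi_congr' (hπ : IsAutoRep κ π) {A B : Set X} (h : Sim κ A B) : Sim κ (π A) (π B) :=
  hπ.1 A B h

lemma pi_empty (hκ : ℵ₀ ≤ κ) (hcp : CardPres κ π) : #(↥(π (∅ : Set X))) < κ := by
  obtain ⟨b, hb1, hb2⟩ := hcp (∅ : Set X)
  have hb : b = (∅ : Set X) := by
    rw [← Set.isEmpty_coe_sort, ← Cardinal.mk_eq_zero_iff]
    rw [hb1]
    simp
  rw [hb] at hb2
  have : π (∅ : Set X) ⊆ symmDiff (π (∅ : Set X)) (∅ : Set X) := by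
    intro x hx
    rw [Set.mem_symmDiff]
    exact Or.inl ⟨hx, fun h => h⟩
  exact small_mono this hb2

lemma pi_of_small (hκ : ℵ₀ ≤ κ) (hπ : IsAutoRep κ π) (hcp : CardPres κ π) {A : Set X}
    (hA : #(↥A) < κ) : #(↥(π A)) < κ := by
  have h1 : Sim κ A (∅ : Set X) := by
    unfold Sim
    have : symmDiff A (∅ : Set X) = A := by simp
    rwa [this]
  have h2 := pi_congr' hπ h1
  exact sim_small (sim_symm h2) (pi_empty hκ hcp) hκ

lemma small_of_pi (hκ : ℵ₀ ≤ κ) (hπ : IsAutoRep κ π) (hcp : CardPres κ π) {A : Set X}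
    (hA : #(↥(π A)) < κ) : #(↥A) < κ := by
  have h1 : Sim κ (π A) (π (∅ : Set X)) := by
    apply sim_of_smalls hκ
    · exact small_mono diff_subset hA
    · exact small_mono diff_subset (pi_empty hκ hcp)
  have h2 := hπ.2.2.2.2 A ∅ h1
  have : A ⊆ symmDiff A (∅ : Set X) := by
    intro x hx
    rw [Set.mem_symmDiff]
    exact Or.inl ⟨hx, fun h => h⟩
  exact small_mono this h2

lemma pi_mono (hπ : IsAutoRep κ π) {A B : Set X} (h : A ⊆ B) :
    #(↥(π A \ π B)) < κ := by
  have hu : A ∪ B = B := Set.union_eq_self_of_subset_left h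
  have h2 := hπ.2.1 A B
  rw [hu] at h2
  refine small_mono ?_ h2
  intro x hx
  rw [Set.mem_symmDiff]
  exact Or.inr ⟨Or.inl hx.1, hx.2⟩

lemma pi_disj (hκ : ℵ₀ ≤ κ) (hπ : IsAutoRep κ π) {A B : Set X} (h : A ∩ B = ∅) :
    #(↥(π A ∩ π B)) < κ := by
  have hsub : A ⊆ Bᶜ := by
    intro x hx hxB
    exact absurd (Set.mem_inter hx hxB) (by rw [h]; exact fun h' => h')
  have h1 : #(↥(π A \ π Bᶜ)) < κ := pi_mono hπ hsub
  have h2 := hπ.2.2.1 B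
  refine small_mono ?_ (small_un hκ h1 h2)
  intro x hx
  by_cases hc : x ∈ π Bᶜ
  · right
    rw [Set.mem_symmDiff]
    exact Or.inl ⟨hc, fun hxc => hxc hx.2⟩
  · exact Or.inl ⟨hx.1, hc⟩

lemma card_eq_of_sim (hκ : ℵ₀ ≤ κ) {Y Z : Set X} (hY : κ ≤ #(↥Y)) (h : Sim κ Y Z) :
    #(↥Z) = #(↥Y) := by
  have hd : #(↥(symmDiff Y Z)) < κ := h
  have hY0 : ℵ₀ ≤ #(↥Y) := le_trans hκ hY
  have hZle : #(↥Z) ≤ #(↥Y) := by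
    have hsub : Z ⊆ Y ∪ symmDiff Y Z := by
      intro x hx
      by_cases hxY : x ∈ Y
      · exact Or.inl hxY
      · exact Or.inr (by rw [Set.mem_symmDiff]; exact Or.inr ⟨hx, hxY⟩)
    calc #(↥Z) ≤ #(↥(Y ∪ symmDiff Y Z)) := Cardinal.mk_le_mk_of_subset hsub
      _ ≤ #(↥Y) + #(↥(symmDiff Y Z)) := Cardinal.mk_union_le _ _
      _ = #(↥Y) := Cardinal.add_eq_left hY0 (le_of_lt (lt_of_lt_of_le hd hY))
  have hYle : #(↥Y) ≤ #(↥Z) := by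
    have hsub : Y ⊆ Z ∪ symmDiff Y Z := by
      intro x hx
      by_cases hxZ : x ∈ Z
      · exact Or.inl hxZ
      · exact Or.inr (by rw [Set.mem_symmDiff]; exact Or.inl ⟨hx, hxZ⟩)
    have hle : #(↥Y) ≤ #(↥Z) + #(↥(symmDiff Y Z)) :=
      le_trans (Cardinal.mk_le_mk_of_subset hsub) (Cardinal.mk_union_le _ _)
    by_cases hZ : #(↥Z) < κ
    · exact absurd (lt_of_le_of_lt hle (Cardinal.add_lt_of_lt hκ hZ hd)) (not_lt.2 hY)
    · push_neg at hZ
      rwa [Cardinal.add_eq_left (le_trans hκ hZ) (le_of_lt (lt_of_lt_of_le hd hZ))] at hle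
  exact le_antisymm hZle hYle

end Aux

section Chain

variable {X : Type u} {W : Type u} [LinearOrder W] [WellFoundedLT W]

/-- Transfinite iteration of `g` starting at `A`, indexed by a well-order `W`. -/
noncomputable def simChain (g : Set X → Set X) (A : Set X) : W → Set X :=
  (wellFounded_lt (α := W)).fix
    (fun w ih => A ∪ ⋃ v : {v : W // v < w}, g (ih v.1 v.2))

lemma simChain_eq (g : Set X → Set X) (A : Set X) (w : W) :
    simChain g A w = A ∪ ⋃ v : {v : W // v < w}, g (simChain g A v.1) := by
  exact WellFounded.fix_eq _ _ w

lemma subset_simChain (g : Set X → Set X) (A : Set X) (w : W) :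
    A ⊆ simChain g A w := by
  rw [simChain_eq]
  exact subset_union_left

lemma simChain_mono (g : Set X → Set X) (A : Set X) {v w : W} (h : v ≤ w) :
    simChain g A v ⊆ simChain g A w := by
  rw [simChain_eq g A v, simChain_eq g A w]
  apply Set.union_subset_union_right
  intro x hx
  rw [Set.mem_iUnion] at hx ⊢
  obtain ⟨u, hu⟩ := hx
  exact ⟨⟨u.1, lt_of_lt_of_le u.2 h⟩, hu⟩

/-- The union of the transfinite iteration. -/
noncomputable def simLimit (g : Set X → Set X) (A : Set X) (W : Type u)
    [LinearOrder W] [WellFoundedLT W] : Set X :=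
  A ∪ ⋃ w : W, g (simChain g A w)

lemma subset_simLimit (g : Set X → Set X) (A : Set X) : A ⊆ simLimit g A W :=
  subset_union_left

lemma g_simChain_subset_simLimit (g : Set X → Set X) (A : Set X) (w : W) :
    g (simChain g A w) ⊆ simLimit g A W :=
  subset_union_right.trans' (Set.subset_iUnion (fun w : W => g (simChain g A w)) w)

lemma simChain_subset_simLimit (g : Set X → Set X) (A : Set X) (w : W) :
    simChain g A w ⊆ simLimit g A W := by
  rw [simChain_eq]
  apply Set.union_subset (subset_simLimit g A)
  apply Set.iUnion_subset
  intro v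
  exact g_simChain_subset_simLimit g A v.1

lemma simLimit_eq_iUnion [Nonempty W] [NoMaxOrder W] (g : Set X → Set X) (A : Set X) :
    simLimit g A W = ⋃ w : W, simChain g A w := by
  apply Set.Subset.antisymm
  · apply Set.union_subset
    · intro x hx
      rw [Set.mem_iUnion]
      exact ⟨Classical.arbitrary W, subset_simChain g A _ hx⟩
    · apply Set.iUnion_subset
      intro w x hx
      obtain ⟨w', hw'⟩ := exists_gt w
      rw [Set.mem_iUnion]
      refine ⟨w', ?_⟩
      rw [simChain_eq]
      right
      rw [Set.mem_iUnion]
      exact ⟨⟨w, hw'⟩, hx⟩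
  · exact Set.iUnion_subset (simChain_subset_simLimit g A)

lemma simChain_card (g : Set X → Set X) (A : Set X) (hA : ℵ₀ ≤ #(↥A))
    (hW : #W ≤ #(↥A)) (hg : ∀ Y : Set X, A ⊆ Y → #(↥Y) ≤ #(↥A) → #(↥(g Y)) ≤ #(↥A)) :
    ∀ w : W, #(↥(simChain g A w)) ≤ #(↥A) := by
  intro w
  induction w using WellFoundedLT.induction with
  | ind w ih =>
    rw [simChain_eq]
    have h1 : #(↥(⋃ v : {v : W // v < w}, g (simChain g A v.1))) ≤ #(↥A) := by
      refine le_trans (Cardinal.mk_iUnion_le _) ?_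
      have hsup : ⨆ v : {v : W // v < w}, #(↥(g (simChain g A v.1))) ≤ #(↥A) :=
        ciSup_le' fun v => hg _ (subset_simChain g A v.1) (ih v.1 v.2)
      have hidx : #({v : W // v < w}) ≤ #(↥A) := le_trans (Cardinal.mk_subtype_le _) hW
      calc #({v : W // v < w}) * (⨆ v : {v : W // v < w}, #(↥(g (simChain g A v.1))))
          ≤ #(↥A) * #(↥A) := mul_le_mul' hidx hsup
        _ = #(↥A) := Cardinal.mul_eq_self hA
    calc #(↥(A ∪ ⋃ v : {v : W // v < w}, g (simChain g A v.1)))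
        ≤ #(↥A) + #(↥(⋃ v : {v : W // v < w}, g (simChain g A v.1))) :=
          Cardinal.mk_union_le _ _
      _ ≤ #(↥A) + #(↥A) := add_le_add_right h1 _
      _ = #(↥A) := Cardinal.add_eq_self hA

lemma simLimit_card (g : Set X → Set X) (A : Set X) (hA : ℵ₀ ≤ #(↥A))
    (hW : #W ≤ #(↥A)) (hg : ∀ Y : Set X, A ⊆ Y → #(↥Y) ≤ #(↥A) → #(↥(g Y)) ≤ #(↥A)) :
    #(↥(simLimit g A W)) = #(↥A) := by
  refine le_antisymm ?_ (Cardinal.mk_le_mk_of_subset (subset_simLimit g A))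
  unfold simLimit
  have h1 : #(↥(⋃ w : W, g (simChain g A w))) ≤ #(↥A) := by
    refine le_trans (Cardinal.mk_iUnion_le _) ?_
    have hsup : ⨆ w : W, #(↥(g (simChain g A w))) ≤ #(↥A) :=
      ciSup_le' fun w => hg _ (subset_simChain g A w)
        (simChain_card g A hA hW hg w)
    calc #W * (⨆ w : W, #(↥(g (simChain g A w)))) ≤ #(↥A) * #(↥A) := mul_le_mul' hW hsup
      _ = #(↥A) := Cardinal.mul_eq_self hA
  calc #(↥(A ∪ ⋃ w : W, g (simChain g A w)))
      ≤ #(↥A) + #(↥(⋃ w : W, g (simChain g A w))) := Cardinal.mk_union_le _ _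
    _ ≤ #(↥A) + #(↥A) := add_le_add_right h1 _
    _ = #(↥A) := Cardinal.add_eq_self hA

end Chain

section UnionLemmas

variable {X : Type u} {κ : Cardinal.{u}} {W : Type u}

/-- Union of few small sets is small, when the index is below the cofinality. -/
lemma union_small_of_lt_cof (hκ : ℵ₀ ≤ κ) (hWcof : #W < κ.ord.cof) (hW : #W < κ)
    {E : W → Set X} (hsmall : ∀ w, #(↥(E w)) < κ) : #(↥(⋃ w, E w)) < κ := by
  have hsup : ⨆ w, #(↥(E w)) < κ := Ordinal.iSup_lt hWcof hsmall
  exact lt_of_le_of_lt (Cardinal.mk_iUnion_le _) (Cardinal.mul_lt_of_lt hκ hW hsup)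

/-- Union of a monotone chain of small sets is small, when `cf(κ) = ℵ₀` and every countable
family in `W` is bounded. -/
lemma union_small_of_cof_aleph0 [LinearOrder W] [Nonempty W] (hκ : ℵ₀ ≤ κ)
    (hcof : κ.ord.cof = ℵ₀)
    (hbdd : ∀ {ι : Type u}, #ι ≤ ℵ₀ → ∀ f : ι → W, ∃ w, ∀ i, f i ≤ w)
    (hW : #W < κ) {E : W → Set X} (hmono : Monotone E)
    (hsmall : ∀ w, #(↥(E w)) < κ) : #(↥(⋃ w, E w)) < κ := by
  have hsup : ⨆ w, #(↥(E w)) < κ := by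
    by_contra hge
    push_neg at hge
    obtain ⟨ι, f, hlsub, hι⟩ := Ordinal.exists_lsub_cof κ.ord
    rw [hcof] at hι
    have hcard : ∀ i, (f i).card < κ := by
      intro i
      rw [← Cardinal.lt_ord, ← hlsub]
      exact Ordinal.lt_lsub f i
    have hwex : ∀ i, ∃ w, (f i).card < #(↥(E w)) := by
      intro i
      exact exists_lt_of_lt_ciSup (lt_of_lt_of_le (hcard i) hge)
    choose wi hwi using hwex
    obtain ⟨w, hw⟩ := hbdd hι.le wi
    have hlt : ∀ i, f i < (#(↥(E w))).ord := by
      intro i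
      rw [Cardinal.lt_ord]
      exact lt_of_lt_of_le (hwi i) (Cardinal.mk_le_mk_of_subset (hmono (hw i)))
    have : κ.ord ≤ (#(↥(E w))).ord := by
      rw [← hlsub]
      exact Ordinal.lsub_le hlt
    rw [Cardinal.ord_le_ord] at this
    exact absurd this (not_le.2 (hsmall w))
  exact lt_of_le_of_lt (Cardinal.mk_iUnion_le _) (Cardinal.mul_lt_of_lt hκ hW hsup)

end UnionLemmas

section Main

variable {X : Type u} {κ : Cardinal.{u}} {π : Set X → Set X}

lemma exists_fixed_point (hκ : ℵ₀ < κ) (hπ : IsAutoRep κ π) (hcp : CardPres κ π)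
    (A : Set X) (hA : κ ≤ #(↥A)) (W : Type u) [LinearOrder W] [WellFoundedLT W]
    [Nonempty W] [NoMaxOrder W] (hWκ : #W < κ)
    (hU : ∀ E : W → Set X, Monotone E → (∀ w, #(↥(E w)) < κ) → #(↥(⋃ w, E w)) < κ) :
    ∃ B : Set X, A ⊆ B ∧ #(↥B) = #(↥A) ∧ Sim κ (π B) B := by
  have hκ0 : ℵ₀ ≤ κ := hκ.le
  have hA0 : ℵ₀ ≤ #(↥A) := le_trans hκ0 hA
  obtain ⟨C, hC1, hC2⟩ : ∃ C : Set X → Set X,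
      (∀ Y, #(↥(C Y)) = #(↥Y)) ∧ (∀ Y, Sim κ (π Y) (C Y)) := by
    choose C h1 h2 using hcp
    exact ⟨C, h1, h2⟩
  obtain ⟨D, hD⟩ : ∃ D : Set X → Set X, ∀ Y, Sim κ (π (D Y)) Y := by
    choose D h using hπ.2.2.2.1
    exact ⟨D, h⟩
  -- cardinality of D Y for large Y
  have hDcard : ∀ Y : Set X, κ ≤ #(↥Y) → #(↥(D Y)) = #(↥Y) := by
    intro Y hY
    have h1 : Sim κ (π (D Y)) (C (D Y)) := hC2 (D Y)
    have h2 : Sim κ (C (D Y)) Y := by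
      apply sim_of_smalls hκ0
      · refine small_mono ?_ (small_un hκ0 h1.diff2 (hD Y).diff1)
        intro x hx
        by_cases hp : x ∈ π (D Y)
        · exact Or.inr ⟨hp, hx.2⟩
        · exact Or.inl ⟨hx.1, hp⟩
      · refine small_mono ?_ (small_un hκ0 (hD Y).diff2 h1.diff1)
        intro x hx
        by_cases hp : x ∈ π (D Y)
        · exact Or.inr ⟨hp, hx.2⟩
        · exact Or.inl ⟨hx.1, hp⟩
    rw [← hC1 (D Y)]
    exact card_eq_of_sim hκ0 hY (sim_symm h2)
  set g : Set X → Set X := fun Y => Y ∪ (C Y ∪ D Y) with hgdef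
  have hgsub : ∀ Y : Set X, Y ⊆ g Y := fun Y => subset_union_left
  have hgcard : ∀ Y : Set X, A ⊆ Y → #(↥Y) ≤ #(↥A) → #(↥(g Y)) ≤ #(↥A) := by
    intro Y hAY hYA
    have hYκ : κ ≤ #(↥Y) := le_trans hA (Cardinal.mk_le_mk_of_subset hAY)
    calc #(↥(g Y)) ≤ #(↥Y) + #(↥(C Y ∪ D Y)) := Cardinal.mk_union_le _ _
      _ ≤ #(↥Y) + (#(↥(C Y)) + #(↥(D Y))) := add_le_add_right (Cardinal.mk_union_le _ _) _
      _ = #(↥Y) + (#(↥Y) + #(↥Y)) := by rw [hC1 Y, hDcard Y hYκ]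
      _ = #(↥Y) := by
          rw [Cardinal.add_eq_self (le_trans hκ0 hYκ),
            Cardinal.add_eq_self (le_trans hκ0 hYκ)]
      _ ≤ #(↥A) := hYA
  set B : Set X := simLimit g A W with hBdef
  have hAB : A ⊆ B := subset_simLimit g A
  have hBcard : #(↥B) = #(↥A) :=
    simLimit_card g A hA0 (le_trans hWκ.le hA) hgcard
  have hBun : B = ⋃ w : W, simChain g A w := simLimit_eq_iUnion g A
  have hchainB : ∀ w : W, simChain g A w ⊆ B := simChain_subset_simLimit g A
  have hCB : ∀ w : W, C (simChain g A w) ⊆ B := fun w =>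
    le_trans (le_trans subset_union_left subset_union_right)
      (g_simChain_subset_simLimit g A w)
  have hDB : ∀ w : W, D (simChain g A w) ⊆ B := fun w =>
    le_trans (le_trans subset_union_right subset_union_right)
      (g_simChain_subset_simLimit g A w)
  refine ⟨B, hAB, hBcard, ?_⟩
  -- Part (i): B \ π B is small
  have part1 : #(↥(B \ π B)) < κ := by
    have hE : ∀ w : W, #(↥(simChain g A w \ π B)) < κ := by
      intro w
      have h1 : Sim κ (π (D (simChain g A w))) (simChain g A w) := hD _
      have h2 : #(↥(π (D (simChain g A w)) \ π B)) < κ := pi_mono hπ (hDB w)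
      refine small_mono ?_ (small_un hκ0 h1.diff2 h2)
      intro x hx
      by_cases hp : x ∈ π (D (simChain g A w))
      · exact Or.inr ⟨hp, hx.2⟩
      · exact Or.inl ⟨hx.1, hp⟩
    have hmono : Monotone (fun w : W => simChain g A w \ π B) := by
      intro v w hvw
      exact Set.diff_subset_diff_left (simChain_mono g A hvw)
    have := hU _ hmono hE
    refine small_mono ?_ this
    rw [hBun]
    intro x hx
    obtain ⟨hx1, hx2⟩ := hx
    rw [Set.mem_iUnion] at hx1 ⊢
    obtain ⟨w, hw⟩ := hx1
    exact ⟨w, hw, hx2⟩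
  -- Part (ii): π B \ B is small
  have part2 : #(↥(π B \ B)) < κ := by
    set S : Set X := π B \ B with hSdef
    have hSB : S ∩ B = ∅ := by
      ext x
      simp only [Set.mem_inter_iff, Set.mem_empty_iff_false, iff_false]
      rintro ⟨⟨_, h2⟩, h3⟩
      exact h2 h3
    have hDS : Sim κ (π (D S)) S := hD S
    -- D S \ B is small
    have hDSB : #(↥(D S \ B)) < κ := by
      apply small_of_pi hκ0 hπ hcp
      have t1 : #(↥(π (D S \ B) \ π (D S))) < κ := pi_mono hπ diff_subset
      have t3 : #(↥(π (D S \ B) ∩ π B)) < κ := by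
        apply pi_disj hκ0 hπ
        ext x
        simp only [Set.mem_inter_iff, Set.mem_empty_iff_false, iff_false]
        rintro ⟨⟨_, h2⟩, h3⟩
        exact h2 h3
      refine small_mono ?_ (small_un3 hκ0 t1 hDS.diff1 t3)
      intro x hx
      simp only [Set.mem_union, Set.mem_diff, Set.mem_inter_iff] at hx ⊢
      have hSmem : x ∈ S → x ∈ π B := fun h => h.1
      by_cases h1 : x ∈ π (D S) <;> by_cases h2 : x ∈ S <;> tauto
    -- D S ∩ simChain w is small for each w
    have hDSw : ∀ w : W, #(↥(D S ∩ simChain g A w)) < κ := by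
      intro w
      apply small_of_pi hκ0 hπ hcp
      have t1 : #(↥(π (D S ∩ simChain g A w) \ π (D S))) < κ :=
        pi_mono hπ Set.inter_subset_left
      have t3 : #(↥(π (D S ∩ simChain g A w) \ π (simChain g A w))) < κ :=
        pi_mono hπ Set.inter_subset_right
      have t4 : Sim κ (π (simChain g A w)) (C (simChain g A w)) := hC2 _
      have t5 : #(↥(S ∩ C (simChain g A w))) < κ := by
        have : S ∩ C (simChain g A w) = ∅ := by
          ext x
          simp only [Set.mem_inter_iff, Set.mem_empty_iff_false, iff_false]
          rintro ⟨hxS, hxC⟩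
          exact hxS.2 (hCB w hxC)
        rw [this]
        simpa using lt_of_le_of_lt zero_le hκ
      have hbig := small_un hκ0 (small_un3 hκ0 t1 hDS.diff1 t3)
        (small_un hκ0 t4.diff1 t5)
      refine small_mono ?_ hbig
      intro x hx
      simp only [Set.mem_union, Set.mem_diff, Set.mem_inter_iff] at hx ⊢
      by_cases h1 : x ∈ π (D S) <;> by_cases h2 : x ∈ S <;>
        by_cases h3 : x ∈ π (simChain g A w) <;>
        by_cases h4 : x ∈ C (simChain g A w) <;> tauto
    -- D S ∩ B is small
    have hDSBint : #(↥(D S ∩ B)) < κ := by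
      have hmono : Monotone (fun w : W => D S ∩ simChain g A w) := by
        intro v w hvw
        exact Set.inter_subset_inter_right _ (simChain_mono g A hvw)
      have := hU _ hmono hDSw
      refine small_mono ?_ this
      rw [hBun]
      intro x hx
      obtain ⟨hx1, hx2⟩ := hx
      rw [Set.mem_iUnion] at hx2 ⊢
      obtain ⟨w, hw⟩ := hx2
      exact ⟨w, hx1, hw⟩
    -- Therefore D S is small, hence π (D S) is small, hence S is small
    have hDSsmall : #(↥(D S)) < κ := by
      refine small_mono ?_ (small_un hκ0 hDSBint hDSB)
      intro x hx
      by_cases hB : x ∈ B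
      · exact Or.inl ⟨hx, hB⟩
      · exact Or.inr ⟨hx, hB⟩
    have hpDS : #(↥(π (D S))) < κ := pi_of_small hκ0 hπ hcp hDSsmall
    refine small_mono ?_ (small_un hκ0 hpDS hDS.diff2)
    intro x hx
    by_cases hp : x ∈ π (D S)
    · exact Or.inl hp
    · exact Or.inr ⟨hx, hp⟩
  exact sim_of_smalls hκ0 part2 part1

end Main

/-- For `κ` uncountable and `π` cardinality-preserving, every set is contained in a fixed
point of `π` of the same cardinality. -/
theorem stmt18 {X : Type u} (κ lam : Cardinal.{u}) (hκ : ℵ₀ < κ)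
    (hkl : κ ≤ lam) (hX : #X = lam)
    (π : Set X → Set X) (hπ : IsAutoRep κ π) (hcp : CardPres κ π) :
    ∀ A : Set X, ∃ B : Set X, A ⊆ B ∧ #(↥B) = #(↥A) ∧ Sim κ (π B) B := by
  intro A
  have hκ0 : ℵ₀ ≤ κ := hκ.le
  by_cases hA : #(↥A) < κ
  · -- small case: B = A works
    refine ⟨A, Set.Subset.rfl, rfl, ?_⟩
    have h1 : #(↥(π A)) < κ := pi_of_small hκ0 hπ hcp hA
    apply sim_of_smalls hκ0
    · exact small_mono diff_subset h1
    · exact small_mono diff_subset hA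
  · push_neg at hA
    have hord : Order.IsSuccLimit (κ.ord) := Cardinal.isSuccLimit_ord hκ0
    by_cases hcof : κ.ord.cof = ℵ₀
    · -- use W of order type ω₁
      set W : Type u := (ℵ₁ : Cardinal.{u}).ord.ToType with hWdef
      haveI : Nonempty W := Ordinal.toType_nonempty_iff_ne_zero.2 (by
        rw [Ne, Cardinal.ord_eq_zero]
        exact (Cardinal.aleph_pos 1).ne')
      haveI : NoMaxOrder W := Cardinal.noMaxOrder aleph0_lt_aleph_one.le
      have hWcard : #W = (ℵ₁ : Cardinal.{u}) := by
        rw [hWdef, Cardinal.mk_toType, Cardinal.card_ord]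
      have haleph1κ : (ℵ₁ : Cardinal.{u}) < κ := by
        rcases lt_or_eq_of_le (Order.succ_le_of_lt hκ) with h | h
        · rwa [Cardinal.succ_aleph0] at h
        · exfalso
          rw [Cardinal.succ_aleph0] at h
          rw [← h] at hcof
          rw [Cardinal.isRegular_aleph_one.cof_eq] at hcof
          exact absurd hcof.symm (ne_of_lt aleph0_lt_aleph_one)
      have hbdd : ∀ {ι : Type u}, #ι ≤ ℵ₀ → ∀ f : ι → W, ∃ w, ∀ i, f i ≤ w := by
        intro ι hι f
        set e := (Ordinal.ToType.mk (o := (ℵ₁ : Cardinal.{u}).ord)) with hedef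
        set f' : ι → Ordinal.{u} := fun i => (e.symm (f i)).1 with hf'def
        have hf'lt : ∀ i, f' i < (ℵ₁ : Cardinal.{u}).ord := fun i => (e.symm (f i)).2
        have hsup : (⨆ i, f' i) < (ℵ₁ : Cardinal.{u}).ord := by
          apply Ordinal.iSup_lt_ord _ hf'lt
          rw [Cardinal.isRegular_aleph_one.cof_eq]
          exact lt_of_le_of_lt hι aleph0_lt_aleph_one
        refine ⟨e ⟨⨆ i, f' i, hsup⟩, fun i => ?_⟩
        have : f i = e (e.symm (f i)) := (e.apply_symm_apply (f i)).symm
        rw [this]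
        apply e.monotone
        show f' i ≤ ⨆ i, f' i
        exact le_ciSup (Ordinal.bddAbove_range f') i
      exact exists_fixed_point hκ hπ hcp A hA W (hWcard ▸ haleph1κ)
        (fun E hmono hsmall =>
          union_small_of_cof_aleph0 hκ0 hcof hbdd (hWcard ▸ haleph1κ) hmono hsmall)
    · -- use W of order type ω
      set W : Type u := (ℵ₀ : Cardinal.{u}).ord.ToType with hWdef
      haveI : Nonempty W := Ordinal.toType_nonempty_iff_ne_zero.2 (by
        rw [Ne, Cardinal.ord_eq_zero]
        exact Cardinal.aleph0_ne_zero)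
      haveI : NoMaxOrder W := Cardinal.noMaxOrder le_rfl
      have hWcard : #W = (ℵ₀ : Cardinal.{u}) := by
        rw [hWdef, Cardinal.mk_toType, Cardinal.card_ord]
      have hWκ : #W < κ := by rw [hWcard]; exact hκ
      have hWcof : #W < κ.ord.cof := by
        rw [hWcard]
        exact lt_of_le_of_ne (Ordinal.aleph0_le_cof.2 hord) (Ne.symm hcof)
      exact exists_fixed_point hκ hπ hcp A hA W hWκ
        (fun E _ hsmall => union_small_of_lt_cof hκ0 hWcof hWκ hsmall)
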